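/- For a dyadic rational t = ∑_{k=1}^n u_k/2^k ∈ [0,1) with digits u_k ∈ {0,1}, let ℓ_n(t) and r_n(t) denote the number of zeros and of ones among u_1, …, u_n. Let (μ_p)_{p ∈ (0,1/2)} be a family of Borel measures on [0,1], each vanishing on singletons, such that μ_p([t, t + 1/2^n]) = p^{ℓ_n(t)} (1−p)^{r_n(t)} for every such t and n ≥ 1, and every p ∈ (0,1/2). Let t_0 = i_0/2^{n_0} and t_1 = i_1/2^{n_1} be dyadic rationals in [0,1) with n_1 ≥ n_0, ℓ_{n_1}(t_1) ≥ ℓ_{n_0}(t_0) and r_{n_1}(t_1) ≥ r_{n_0}(t_0), and set I_0 = [t_0, t_0 + 1/2^{n_0}], I_1 = [t_1, t_1 + 1/2^{n_1}]. Then: (a) there exists j ∈ ℕ such that J = [j/2^{n_1}, (j+1)/2^{n_1}] ⊆ I_0 and μ_p(J) = μ_p(I_1) for every p ∈ (0,1/2); and (b) for all real α, β ∈ I_1 with α < β there exist α_1, β_1 ∈ I_0 with α_1 < β_1 and μ_p([α_1, β_1]) = μ_p([α, β]) for every p ∈ (0,1/2). -/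

import Mathlib

open MeasureTheory Set Finset


noncomputable def tval (n : ℕ) (u : Fin n → Bool) : ℝ :=
  ∑ k : Fin n, (if u k then (1:ℝ) else 0) / 2 ^ ((k : ℕ) + 1)

def lcnt (n : ℕ) (u : Fin n → Bool) : ℕ := (univ.filter fun k : Fin n => u k = false).card
def rcnt (n : ℕ) (u : Fin n → Bool) : ℕ := (univ.filter fun k : Fin n => u k = true).card

lemma lcnt_add_rcnt (n : ℕ) (u : Fin n → Bool) : lcnt n u + rcnt n u = n := by
  classical
  have h := Finset.card_filter_add_card_filter_not (s := (univ : Finset (Fin n)))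
    (p := fun k => u k = false)
  have h2 : (univ.filter fun k : Fin n => ¬ u k = false) = univ.filter fun k : Fin n => u k = true := by
    apply Finset.filter_congr; intro k _; simp
  rw [h2] at h
  simpa [lcnt, rcnt] using h

lemma tval_snoc (m : ℕ) (w : Fin m → Bool) (b : Bool) :
    tval (m+1) (Fin.snoc w b) = tval m w + (if b then (1:ℝ) else 0) / 2 ^ (m+1) := by
  simp [tval, Fin.sum_univ_castSucc]

lemma lcnt_snoc (m : ℕ) (w : Fin m → Bool) (b : Bool) :
    lcnt (m+1) (Fin.snoc w b) = lcnt m w + (if b then 0 else 1) := by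
  classical
  simp only [lcnt, Finset.card_filter, Fin.sum_univ_castSucc, Fin.snoc_castSucc, Fin.snoc_last]
  cases b <;> simp

lemma split_Icc (ν : Measure ℝ) (h0 : ∀ x : ℝ, ν {x} = 0) {a b c : ℝ}
    (hab : a ≤ b) (hbc : b ≤ c) : ν (Icc a c) = ν (Icc a b) + ν (Icc b c) := by
  have hu : Icc a b ∪ Icc b c = Icc a c := Set.Icc_union_Icc_eq_Icc hab hbc
  have hi : Icc a b ∩ Icc b c = {b} := Set.Icc_inter_Icc_eq_singleton hab hbc
  have := measure_union_add_inter (μ := ν) (Icc a b) (measurableSet_Icc (a := b) (b := c))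
  rw [hu, hi, h0] at this
  simpa using this



lemma step (ν : Measure ℝ) (h0 : ∀ x : ℝ, ν {x} = 0)
    (hv : ∀ n, 1 ≤ n → ∀ u u' : Fin n → Bool, lcnt n u = lcnt n u' →
      ν (Icc (tval n u) (tval n u + 1/2^n)) = ν (Icc (tval n u') (tval n u' + 1/2^n))) :
    ∀ q m, 1 ≤ m → ∀ w w' : Fin m → Bool, lcnt m w = lcnt m w' → ∀ j : ℕ, j ≤ 2^q →
      ν (Icc (tval m w) (tval m w + j/2^(m+q)))
        = ν (Icc (tval m w') (tval m w' + j/2^(m+q))) := by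
  intro q
  induction q with
  | zero =>
    intro m hm w w' hl j hj
    interval_cases j
    · simp [h0]
    · simpa using hv m hm w w' hl
  | succ q ih =>
    intro m hm w w' hl j hj
    have hexp : m + (q+1) = (m+1) + q := by omega
    rw [hexp]
    have hl0 : lcnt (m+1) (Fin.snoc w false) = lcnt (m+1) (Fin.snoc w' false) := by
      rw [lcnt_snoc, lcnt_snoc, hl]
    have hl1 : lcnt (m+1) (Fin.snoc w true) = lcnt (m+1) (Fin.snoc w' true) := by
      rw [lcnt_snoc, lcnt_snoc, hl]
    have ht0 : tval (m+1) (Fin.snoc w false) = tval m w := by simp [tval_snoc]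
    have ht0' : tval (m+1) (Fin.snoc w' false) = tval m w' := by simp [tval_snoc]
    have ht1 : tval (m+1) (Fin.snoc w true) = tval m w + 1/2^(m+1) := by simp [tval_snoc]
    have ht1' : tval (m+1) (Fin.snoc w' true) = tval m w' + 1/2^(m+1) := by simp [tval_snoc]
    by_cases hj' : j ≤ 2^q
    · have := ih (m+1) (by omega) (Fin.snoc w false) (Fin.snoc w' false) hl0 j hj'
      rwa [ht0, ht0'] at this
    · push_neg at hj'
      -- split at tval w + 2^q/2^(m+1+q) = tval w + 1/2^(m+1)
      have key : (2^q : ℝ)/2^((m+1)+q) = 1/2^(m+1) := by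
        rw [pow_add]; field_simp
      have hnn : (0:ℝ) < 2^((m+1)+q) := by positivity
      have hsplit : ∀ v : Fin m → Bool,
          ν (Icc (tval m v) (tval m v + j/2^((m+1)+q)))
          = ν (Icc (tval m v) (tval m v + 1/2^(m+1)))
            + ν (Icc (tval m v + 1/2^(m+1)) (tval m v + 1/2^(m+1) + ((j - 2^q : ℕ) : ℝ)/2^((m+1)+q))) := by
        intro v
        have hc : tval m v + 1/2^(m+1) + ((j - 2^q : ℕ) : ℝ)/2^((m+1)+q)
            = tval m v + j/2^((m+1)+q) := by
          rw [Nat.cast_sub (le_of_lt hj')]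
          push_cast
          rw [← key]; ring
        rw [← hc]
        refine split_Icc ν h0 ?_ ?_
        · have : (0:ℝ) ≤ 1/2^(m+1) := by positivity
          linarith
        · have : (0:ℝ) ≤ ((j - 2^q : ℕ) : ℝ)/2^((m+1)+q) := by positivity
          linarith
      rw [hsplit w, hsplit w']
      congr 1
      · have := ih (m+1) (by omega) (Fin.snoc w false) (Fin.snoc w' false) hl0 (2^q) le_rfl
        push_cast at this
        rw [ht0, ht0', key] at this
        exact this
      · have := ih (m+1) (by omega) (Fin.snoc w true) (Fin.snoc w' true) hl1 (j - 2^q)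
          (by omega)
        rwa [ht1, ht1'] at this

lemma exists_word : ∀ q m : ℕ, ∀ i : ℕ, 1 ≤ m → i < 2^q → ∀ w : Fin m → Bool,
    ∃ M : ℕ, ∃ v : Fin M → Bool, M = m + q ∧ tval M v = tval m w + (i:ℝ)/2^(m+q) := by
  intro q
  induction q with
  | zero =>
    intro m i hm hi w
    interval_cases i
    exact ⟨m, w, by simp, by simp⟩
  | succ q ih =>
    intro m i hm hi w
    have hexp : m + (q+1) = (m+1) + q := by omega
    by_cases hi' : i < 2^q
    · obtain ⟨M, v, hM, hv⟩ := ih (m+1) i (by omega) hi' (Fin.snoc w false)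
      refine ⟨M, v, by omega, ?_⟩
      rw [hv, tval_snoc, hexp]; simp
    · push_neg at hi'
      obtain ⟨M, v, hM, hv⟩ := ih (m+1) (i - 2^q) (by omega) (by omega) (Fin.snoc w true)
      refine ⟨M, v, by omega, ?_⟩
      rw [hv, tval_snoc, hexp]
      have key : ((2:ℝ))^q/2^((m+1)+q) = 1/2^(m+1) := by
        rw [pow_add]; field_simp
      rw [Nat.cast_sub hi']
      have h1 : (if true = true then (1:ℝ) else 0) = 1 := rfl
      rw [h1]
      push_cast
      rw [← key]; ring

lemma half (ν : Measure ℝ) (h0 : ∀ x : ℝ, ν {x} = 0) (c : ℝ) (hc0 : 0 ≤ c) (hc1 : c < 1)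
    (hv : ∀ n, 1 ≤ n → ∀ u u' : Fin n → Bool, lcnt n u = lcnt n u' →
      ν (Icc (tval n u) (tval n u + 1/2^n)) = ν (Icc (tval n u') (tval n u' + 1/2^n)))
    (hb : ∀ M, 1 ≤ M → ∀ v : Fin M → Bool,
      ν (Icc (tval M v) (tval M v + 1/2^M)) ≤ ENNReal.ofReal (c^M))
    (n : ℕ) (hn : 1 ≤ n) (w w' : Fin n → Bool) (hl : lcnt n w = lcnt n w')
    (α β : ℝ) (hα : tval n w ≤ α) (hβ : β ≤ tval n w + 1/2^n) (hab : α < β) :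
    ν (Icc (α + (tval n w' - tval n w)) (β + (tval n w' - tval n w))) ≤ ν (Icc α β) := by
  apply ENNReal.le_of_forall_pos_le_add
  intro ε hε _
  -- pick q
  have htend : Filter.Tendsto (fun q : ℕ => c^q) Filter.atTop (nhds 0) :=
    tendsto_pow_atTop_nhds_zero_of_lt_one hc0 hc1
  have hε2 : (0:ℝ) < (ε:ℝ)/2 := by positivity
  obtain ⟨q, hq⟩ : ∃ q : ℕ, c ^ q < (ε:ℝ)/2 :=
    ((htend.eventually (eventually_lt_nhds hε2)).exists)
  set M := n + q with hM
  have h2M : (0:ℝ) < 2^M := by positivity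
  have h2n : (0:ℝ) < 2^n := by positivity
  have hMsplit : (2:ℝ)^M = 2^n * 2^q := by rw [hM, pow_add]
  set tw := tval n w with htw
  set tw' := tval n w' with htw'
  set A := α - tw with hA
  set B := β - tw with hB
  have hA0 : 0 ≤ A := by rw [hA]; linarith
  have hAB : A < B := by rw [hA, hB]; linarith
  have hB2 : B ≤ 1/2^n := by rw [hB]; linarith
  set i := ⌊A * 2^M⌋₊ with hi
  set j := ⌈B * 2^M⌉₊ with hj
  have hiA : (i:ℝ) ≤ A*2^M := Nat.floor_le (mul_nonneg hA0 h2M.le)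
  have hAi : A*2^M < (i:ℝ)+1 := Nat.lt_floor_add_one _
  have hBj : B*2^M ≤ (j:ℝ) := Nat.le_ceil _
  have hjB : (j:ℝ) - 1 < B*2^M := by
    have := Nat.ceil_lt_add_one (show (0:ℝ) ≤ B*2^M from mul_nonneg (le_trans hA0 hAB.le) h2M.le)
    linarith
  have hB2q : B * 2^M ≤ 2^q := by
    rw [hMsplit]
    calc B * (2^n * 2^q) ≤ (1/2^n) * (2^n*2^q) :=
          mul_le_mul_of_nonneg_right hB2 (by positivity)
      _ = 2^q := by field_simp
  have hj2q : j ≤ 2^q := by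
    rw [hj]; exact_mod_cast Nat.ceil_le.mpr (by exact_mod_cast hB2q)
  have hi2q : i < 2^q := by
    have : (i:ℝ) < 2^q := lt_of_le_of_lt hiA
      (lt_of_lt_of_le (by apply mul_lt_mul_of_pos_right hAB h2M) hB2q)
    exact_mod_cast this
  have hijR : (i:ℝ) ≤ (j:ℝ) :=
    le_trans hiA (le_trans (mul_le_mul_of_nonneg_right hAB.le h2M.le) hBj)
  have hij : (i:ℝ)/2^M ≤ (j:ℝ)/2^M := by gcongr
  have hj1 : 1 ≤ j := by
    rw [hj]
    apply Nat.ceil_pos.mpr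
    have : 0 < B := lt_of_le_of_lt hA0 hAB
    positivity
  -- the middle dyadic intervals have equal measure
  have hi2M : (i:ℝ)/2^M ≤ 1/2^n := by
    rw [div_le_iff₀ h2M, hMsplit]
    calc (i:ℝ) ≤ 2^q := by
          have : (i:ℝ) < 2^q := by exact_mod_cast hi2q
          linarith
      _ = 1/2^n * (2^n * 2^q) := by field_simp
  have hfinF : ν (Icc tw (tw + (i:ℝ)/2^M)) ≠ ⊤ := by
    have hsub : Icc tw (tw + (i:ℝ)/2^M) ⊆ Icc tw (tw + 1/2^n) :=
      Icc_subset_Icc le_rfl (by linarith)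
    have := le_trans (measure_mono (μ := ν) hsub) (hb n hn w)
    exact ne_top_of_le_ne_top ENNReal.ofReal_ne_top this
  have hstepi := step ν h0 hv q n hn w w' hl i hi2q.le
  have hstepj := step ν h0 hv q n hn w w' hl j hj2q
  have hsplw := split_Icc ν h0 (show tw ≤ tw + (i:ℝ)/2^M by
      have : (0:ℝ) ≤ (i:ℝ)/2^M := by positivity
      linarith)
    (show tw + (i:ℝ)/2^M ≤ tw + (j:ℝ)/2^M by linarith)
  have hsplw' := split_Icc ν h0 (show tw' ≤ tw' + (i:ℝ)/2^M by
      have : (0:ℝ) ≤ (i:ℝ)/2^M := by positivity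
      linarith)
    (show tw' + (i:ℝ)/2^M ≤ tw' + (j:ℝ)/2^M by linarith)
  have eO : ν (Icc (tw + (i:ℝ)/2^M) (tw + (j:ℝ)/2^M))
      = ν (Icc (tw' + (i:ℝ)/2^M) (tw' + (j:ℝ)/2^M)) := by
    have heq : ν (Icc tw (tw + (i:ℝ)/2^M)) + ν (Icc (tw + (i:ℝ)/2^M) (tw + (j:ℝ)/2^M))
        = ν (Icc tw (tw + (i:ℝ)/2^M)) + ν (Icc (tw' + (i:ℝ)/2^M) (tw' + (j:ℝ)/2^M)) := by
      rw [← hsplw, hstepj, hsplw', ← hstepi]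
    exact (ENNReal.add_right_inj hfinF).mp heq
  -- subset of translate
  have hsub1 : Icc (α + (tw' - tw)) (β + (tw' - tw))
      ⊆ Icc (tw' + (i:ℝ)/2^M) (tw' + (j:ℝ)/2^M) := by
    apply Set.Icc_subset_Icc
    · have : (i:ℝ)/2^M ≤ A := by rw [div_le_iff₀ h2M]; exact hiA
      rw [hA] at this; linarith
    · have : B ≤ (j:ℝ)/2^M := by rw [le_div_iff₀ h2M]; exact hBj
      rw [hB] at this; linarith
  -- cover of the middle interval
  have hcover : Icc (tw + (i:ℝ)/2^M) (tw + (j:ℝ)/2^M)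
      ⊆ (Icc (tw + (i:ℝ)/2^M) (tw + ((i:ℝ)+1)/2^M) ∪ Icc α β)
        ∪ Icc (tw + ((j:ℝ)-1)/2^M) (tw + (j:ℝ)/2^M) := by
    intro x hx
    obtain ⟨hx1, hx2⟩ := hx
    by_cases hxl : x ≤ tw + ((i:ℝ)+1)/2^M
    · exact Or.inl (Or.inl ⟨hx1, hxl⟩)
    by_cases hxr : tw + ((j:ℝ)-1)/2^M ≤ x
    · exact Or.inr ⟨hxr, hx2⟩
    push_neg at hxl hxr
    refine Or.inl (Or.inr ⟨?_, ?_⟩)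
    · have hA' : A < ((i:ℝ)+1)/2^M := by rw [lt_div_iff₀ h2M]; exact hAi
      rw [hA] at hA'; linarith
    · have hB' : ((j:ℝ)-1)/2^M < B := by rw [div_lt_iff₀ h2M]; exact hjB
      rw [hB] at hB'; linarith
  -- edge bounds
  have hedgeL : ν (Icc (tw + (i:ℝ)/2^M) (tw + ((i:ℝ)+1)/2^M)) ≤ ENNReal.ofReal (c^M) := by
    obtain ⟨M₁, v₁, hM₁, hv₁⟩ := exists_word q n i hn hi2q w
    rw [← hM] at hM₁ hv₁
    subst hM₁
    have : Icc (tw + (i:ℝ)/2^M) (tw + ((i:ℝ)+1)/2^M) = Icc (tval M v₁) (tval M v₁ + 1/2^M) := by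
      rw [hv₁, ← htw]; congr 1; ring
    rw [this]
    exact hb M (by omega) v₁
  have hedgeR : ν (Icc (tw + ((j:ℝ)-1)/2^M) (tw + (j:ℝ)/2^M)) ≤ ENNReal.ofReal (c^M) := by
    obtain ⟨M₁, v₁, hM₁, hv₁⟩ := exists_word q n (j-1) hn (by omega) w
    rw [← hM] at hM₁ hv₁
    subst hM₁
    have hc1' : ((j-1 : ℕ):ℝ) = (j:ℝ) - 1 := by
      rw [Nat.cast_sub hj1]; norm_num
    have : Icc (tw + ((j:ℝ)-1)/2^M) (tw + (j:ℝ)/2^M) = Icc (tval M v₁) (tval M v₁ + 1/2^M) := by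
      rw [hv₁, ← htw, hc1']
      congr 1; ring
    rw [this]
    exact hb M (by omega) v₁
  -- final chain
  have hcM : c^M ≤ c^q := pow_le_pow_of_le_one hc0 hc1.le (by omega)
  calc ν (Icc (α + (tw' - tw)) (β + (tw' - tw)))
      ≤ ν (Icc (tw' + (i:ℝ)/2^M) (tw' + (j:ℝ)/2^M)) := measure_mono hsub1
    _ = ν (Icc (tw + (i:ℝ)/2^M) (tw + (j:ℝ)/2^M)) := eO.symm
    _ ≤ ν ((Icc (tw + (i:ℝ)/2^M) (tw + ((i:ℝ)+1)/2^M) ∪ Icc α β)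
        ∪ Icc (tw + ((j:ℝ)-1)/2^M) (tw + (j:ℝ)/2^M)) := measure_mono hcover
    _ ≤ (ν (Icc (tw + (i:ℝ)/2^M) (tw + ((i:ℝ)+1)/2^M)) + ν (Icc α β))
        + ν (Icc (tw + ((j:ℝ)-1)/2^M) (tw + (j:ℝ)/2^M)) :=
      le_trans (measure_union_le _ _) (add_le_add_left (measure_union_le _ _) _)
    _ ≤ (ENNReal.ofReal (c^M) + ν (Icc α β)) + ENNReal.ofReal (c^M) := by
      exact add_le_add (add_le_add hedgeL le_rfl) hedgeR
    _ = ν (Icc α β) + (ENNReal.ofReal (c^M) + ENNReal.ofReal (c^M)) := by ring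
    _ ≤ ν (Icc α β) + ε := by
      apply add_le_add_right
      rw [← ENNReal.ofReal_add (by positivity) (by positivity)]
      have h1 : c^M + c^M ≤ (ε:ℝ) := by linarith
      calc ENNReal.ofReal (c^M + c^M) ≤ ENNReal.ofReal (ε:ℝ) := ENNReal.ofReal_le_ofReal h1
        _ = (ε : ENNReal) := ENNReal.ofReal_coe_nnreal


section
variable (n₀ n₁ : ℕ) (u₀ : Fin n₀ → Bool) (d : ℕ)

-- extension word as a function on ℕ
noncomputable def gfun : ℕ → Bool := fun i =>
  if h : i < n₀ then u₀ ⟨i, h⟩ else decide (n₀ + d ≤ i)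

noncomputable def wext : Fin n₁ → Bool := fun k => gfun n₀ u₀ d (k : ℕ)

lemma lcnt_wext (hd : n₀ + d ≤ n₁) :
    lcnt n₁ (wext n₀ n₁ u₀ d) = lcnt n₀ u₀ + d := by
  classical
  have h1 : lcnt n₁ (wext n₀ n₁ u₀ d)
      = ∑ k ∈ range n₁, (if gfun n₀ u₀ d k = false then 1 else 0) := by
    rw [lcnt, Finset.card_filter]
    exact Fin.sum_univ_eq_sum_range (fun i => if gfun n₀ u₀ d i = false then 1 else 0) n₁
  have h2 : lcnt n₀ u₀ = ∑ k ∈ range n₀, (if gfun n₀ u₀ d k = false then 1 else 0) := by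
    rw [lcnt, Finset.card_filter]
    rw [← Fin.sum_univ_eq_sum_range (fun i => if gfun n₀ u₀ d i = false then 1 else 0) n₀]
    apply Finset.sum_congr rfl
    intro k _
    have hg : gfun n₀ u₀ d (k:ℕ) = u₀ k := by simp [gfun, k.isLt]
    rw [hg]
  have h3 : ∑ k ∈ range n₁, (if gfun n₀ u₀ d k = false then 1 else 0)
      = (∑ k ∈ range n₀, (if gfun n₀ u₀ d k = false then 1 else 0))
        + ∑ k ∈ Finset.Ico n₀ n₁, (if gfun n₀ u₀ d k = false then 1 else 0) := by
    rw [Finset.range_eq_Ico, Finset.range_eq_Ico]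
    exact (Finset.sum_Ico_consecutive _ (Nat.zero_le n₀) (by omega)).symm
  have h4 : ∑ k ∈ Finset.Ico n₀ n₁, (if gfun n₀ u₀ d k = false then 1 else 0) = d := by
    have : ∀ k ∈ Finset.Ico n₀ n₁, (if gfun n₀ u₀ d k = false then 1 else 0)
        = if k < n₀ + d then 1 else 0 := by
      intro k hk
      simp only [Finset.mem_Ico] at hk
      have hg : gfun n₀ u₀ d k = decide (n₀ + d ≤ k) := by simp [gfun, Nat.not_lt.mpr hk.1]
      rw [hg]
      rcases Nat.lt_or_ge k (n₀ + d) with h | h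
      · have h' : ¬ (n₀ + d ≤ k) := by omega
        simp [h', h]
      · have h2 : ¬ k < n₀ + d := by omega
        simp [h, h2]
    rw [Finset.sum_congr rfl this, ← Finset.card_filter]
    have : (Finset.Ico n₀ n₁).filter (fun k => k < n₀ + d) = Finset.Ico n₀ (n₀ + d) := by
      ext k; simp only [Finset.mem_filter, Finset.mem_Ico]; omega
    rw [this, Nat.card_Ico]
    omega
  omega

lemma tval_wext (hd : n₀ + d ≤ n₁) :
    tval n₁ (wext n₀ n₁ u₀ d) = tval n₀ u₀
      + ∑ k ∈ Finset.Ico n₀ n₁, (if gfun n₀ u₀ d k then (1:ℝ) else 0) / 2^(k+1) := by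
  classical
  have h1 : tval n₁ (wext n₀ n₁ u₀ d)
      = ∑ k ∈ range n₁, (if gfun n₀ u₀ d k then (1:ℝ) else 0) / 2^(k+1) :=
    Fin.sum_univ_eq_sum_range (fun i => (if gfun n₀ u₀ d i then (1:ℝ) else 0) / 2^(i+1)) n₁
  have h2 : tval n₀ u₀ = ∑ k ∈ range n₀, (if gfun n₀ u₀ d k then (1:ℝ) else 0) / 2^(k+1) := by
    rw [tval, ← Fin.sum_univ_eq_sum_range (fun i => (if gfun n₀ u₀ d i then (1:ℝ) else 0) / 2^(i+1)) n₀]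
    apply Finset.sum_congr rfl
    intro k _
    have hg : gfun n₀ u₀ d (k:ℕ) = u₀ k := by simp [gfun, k.isLt]
    rw [hg]
  rw [h1, h2, Finset.range_eq_Ico, Finset.range_eq_Ico]
  exact (Finset.sum_Ico_consecutive _ (Nat.zero_le n₀) (by omega)).symm

end

lemma geo (m : ℕ) : ∑ k ∈ range m, (1:ℝ)/2^(k+1) = 1 - 1/2^m := by
  induction m with
  | zero => simp
  | succ m ih =>
    rw [Finset.sum_range_succ, ih]
    have : (2:ℝ)^(m+1) = 2^m * 2 := by ring
    rw [this]
    have h2 : (2:ℝ)^m ≠ 0 := by positivity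
    field_simp
    ring

lemma tval_num (n : ℕ) (v : Fin n → Bool) : ∃ j : ℕ, (j:ℝ)/2^n = tval n v := by
  refine ⟨∑ k : Fin n, if v k then 2^(n-1-(k:ℕ)) else 0, ?_⟩
  rw [tval]
  push_cast
  rw [Finset.sum_div]
  apply Finset.sum_congr rfl
  intro k _
  rcases h : v k with _ | _
  · simp [h]
  · simp only [h, if_true]
    rw [div_eq_div_iff (by positivity) (by positivity), one_mul, ← pow_add]
    congr 1
    have := k.isLt; omega


/-- Lemma 3 of the paper. Let `(μ p)` for `p ∈ (0,1/2)` be Borel measures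
on `[0,1]` vanishing on singletons such that for each dyadic rational
`t = ∑ u k / 2^(k+1)` of level `n ≥ 1` one has
`μ p [t, t + 1/2^n] = p^(ℓ n t) * (1-p)^(r n t)`, where `ℓ n t`, `r n t` count the zeros and
ones among the binary digits of `t`. If `t₀`, `t₁` are dyadic rationals of levels
`n₀ ≤ n₁` with `ℓ(t₁) ≥ ℓ(t₀)` and `r(t₁) ≥ r(t₀)`, then (a) `I₀ = [t₀, t₀ + 1/2^n₀]`
contains a dyadic interval `J` of level `n₁` with `μ p J = μ p I₁` for all `p`, and
(b) every subinterval `[α,β]` of `I₁ = [t₁, t₁ + 1/2^n₁]` has a translate `[α₁,β₁] ⊆ I₀`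
with the same `μ p`-measure for all `p`. -/
theorem dyadic_interval_transfer
    (μ : ℝ → Measure ℝ)
    (hsing : ∀ p ∈ Ioo (0:ℝ) (1/2), ∀ x : ℝ, μ p {x} = 0)
    (hval : ∀ p ∈ Ioo (0:ℝ) (1/2), ∀ n : ℕ, 1 ≤ n → ∀ u : Fin n → Bool,
      μ p (Icc (∑ k : Fin n, (if u k then (1:ℝ) else 0) / 2 ^ ((k : ℕ) + 1))
            ((∑ k : Fin n, (if u k then (1:ℝ) else 0) / 2 ^ ((k : ℕ) + 1)) + 1 / 2 ^ n))
        = ENNReal.ofReal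
            (p ^ (univ.filter fun k : Fin n => u k = false).card *
              (1 - p) ^ (univ.filter fun k : Fin n => u k = true).card))
    (n₀ n₁ : ℕ) (hn₀ : 1 ≤ n₀) (hn : n₀ ≤ n₁)
    (u₀ : Fin n₀ → Bool) (u₁ : Fin n₁ → Bool)
    (hl : (univ.filter fun k : Fin n₀ => u₀ k = false).card
        ≤ (univ.filter fun k : Fin n₁ => u₁ k = false).card)
    (hr : (univ.filter fun k : Fin n₀ => u₀ k = true).card
        ≤ (univ.filter fun k : Fin n₁ => u₁ k = true).card)
    (t₀ t₁ : ℝ)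
    (ht₀ : t₀ = ∑ k : Fin n₀, (if u₀ k then (1:ℝ) else 0) / 2 ^ ((k : ℕ) + 1))
    (ht₁ : t₁ = ∑ k : Fin n₁, (if u₁ k then (1:ℝ) else 0) / 2 ^ ((k : ℕ) + 1)) :
    (∃ j : ℕ, Icc ((j : ℝ) / 2 ^ n₁) (((j : ℝ) + 1) / 2 ^ n₁) ⊆ Icc t₀ (t₀ + 1 / 2 ^ n₀) ∧
      ∀ p ∈ Ioo (0:ℝ) (1/2),
        μ p (Icc ((j : ℝ) / 2 ^ n₁) (((j : ℝ) + 1) / 2 ^ n₁))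
          = μ p (Icc t₁ (t₁ + 1 / 2 ^ n₁))) ∧
    (∀ α β : ℝ, α ∈ Icc t₁ (t₁ + 1 / 2 ^ n₁) → β ∈ Icc t₁ (t₁ + 1 / 2 ^ n₁) → α < β →
      ∃ α₁ β₁ : ℝ, α₁ ∈ Icc t₀ (t₀ + 1 / 2 ^ n₀) ∧ β₁ ∈ Icc t₀ (t₀ + 1 / 2 ^ n₀) ∧
        α₁ < β₁ ∧ ∀ p ∈ Ioo (0:ℝ) (1/2), μ p (Icc α₁ β₁) = μ p (Icc α β)) := by
  
  classical
  have hn₁ : 1 ≤ n₁ := le_trans hn₀ hn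
  have hl' : lcnt n₀ u₀ ≤ lcnt n₁ u₁ := hl
  have hr' : rcnt n₀ u₀ ≤ rcnt n₁ u₁ := hr
  have ht₀' : t₀ = tval n₀ u₀ := ht₀
  have ht₁' : t₁ = tval n₁ u₁ := ht₁
  set d := lcnt n₁ u₁ - lcnt n₀ u₀ with hdd
  have hsum₀ := lcnt_add_rcnt n₀ u₀
  have hsum₁ := lcnt_add_rcnt n₁ u₁
  have hd : n₀ + d ≤ n₁ := by omega
  set w := wext n₀ n₁ u₀ d with hww
  have hlw : lcnt n₁ w = lcnt n₁ u₁ := by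
    rw [hww, lcnt_wext n₀ n₁ u₀ d hd]; omega
  have htw := tval_wext n₀ n₁ u₀ d hd
  have tail_nonneg : 0 ≤ ∑ k ∈ Finset.Ico n₀ n₁,
      (if gfun n₀ u₀ d k then (1:ℝ) else 0) / 2^(k+1) := by
    apply Finset.sum_nonneg; intro k _; positivity
  have tail_le : ∑ k ∈ Finset.Ico n₀ n₁, (if gfun n₀ u₀ d k then (1:ℝ) else 0) / 2^(k+1)
      ≤ 1/2^n₀ - 1/2^n₁ := by
    calc ∑ k ∈ Finset.Ico n₀ n₁, (if gfun n₀ u₀ d k then (1:ℝ) else 0) / 2^(k+1)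
        ≤ ∑ k ∈ Finset.Ico n₀ n₁, (1:ℝ)/2^(k+1) := by
          apply Finset.sum_le_sum; intro k _
          split_ifs
          · exact le_rfl
          · rw [zero_div]; positivity
      _ = (1 - 1/2^n₁) - (1 - 1/2^n₀) := by
          rw [Finset.sum_Ico_eq_sub _ hn, geo, geo]
      _ = 1/2^n₀ - 1/2^n₁ := by ring
  have htw0 : t₀ ≤ tval n₁ w := by rw [ht₀', htw]; linarith
  have htw1 : tval n₁ w + 1/2^n₁ ≤ t₀ + 1/2^n₀ := by rw [ht₀', htw]; linarith
  obtain ⟨j, hjw⟩ := tval_num n₁ w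
  have hj1 : ((j:ℝ)+1)/2^n₁ = tval n₁ w + 1/2^n₁ := by rw [add_div, hjw]
  -- per-p hypotheses
  have hv : ∀ p ∈ Ioo (0:ℝ) (1/2), ∀ n, 1 ≤ n → ∀ u u' : Fin n → Bool,
      lcnt n u = lcnt n u' →
      μ p (Icc (tval n u) (tval n u + 1/2^n)) = μ p (Icc (tval n u') (tval n u' + 1/2^n)) := by
    intro p hp n hnn u u' hluu
    have h1 : μ p (Icc (tval n u) (tval n u + 1/2^n))
        = ENNReal.ofReal (p ^ lcnt n u * (1-p) ^ rcnt n u) := hval p hp n hnn u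
    have h2 : μ p (Icc (tval n u') (tval n u' + 1/2^n))
        = ENNReal.ofReal (p ^ lcnt n u' * (1-p) ^ rcnt n u') := hval p hp n hnn u'
    have hrr : rcnt n u = rcnt n u' := by
      have := lcnt_add_rcnt n u; have := lcnt_add_rcnt n u'; omega
    rw [h1, h2, hluu, hrr]
  have hb : ∀ p ∈ Ioo (0:ℝ) (1/2), ∀ M, 1 ≤ M → ∀ v : Fin M → Bool,
      μ p (Icc (tval M v) (tval M v + 1/2^M)) ≤ ENNReal.ofReal ((1-p)^M) := by
    intro p hp M hM v
    have h1 : μ p (Icc (tval M v) (tval M v + 1/2^M))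
        = ENNReal.ofReal (p ^ lcnt M v * (1-p) ^ rcnt M v) := hval p hp M hM v
    rw [h1]
    apply ENNReal.ofReal_le_ofReal
    obtain ⟨hp0, hp2⟩ := hp
    have hple : p ≤ 1 - p := by norm_num at hp2 ⊢; linarith
    have h1p : (0:ℝ) ≤ 1 - p := by linarith
    calc p ^ lcnt M v * (1-p) ^ rcnt M v
        ≤ (1-p) ^ lcnt M v * (1-p) ^ rcnt M v :=
          mul_le_mul_of_nonneg_right (pow_le_pow_left₀ hp0.le hple _) (by positivity)
      _ = (1-p)^M := by rw [← pow_add, lcnt_add_rcnt]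
  constructor
  · refine ⟨j, ?_, ?_⟩
    · rw [hjw, hj1]; exact Set.Icc_subset_Icc htw0 htw1
    · intro p hp
      rw [hjw, hj1, ht₁']
      have hst := step (μ p) (hsing p hp) (hv p hp) 0 n₁ hn₁ w u₁ hlw 1 (by norm_num)
      norm_num at hst
      rw [one_div]
      exact hst
  · intro α β hα hβ hab
    obtain ⟨ha1, ha2⟩ := hα
    obtain ⟨hb1, hb2⟩ := hβ
    refine ⟨α + (tval n₁ w - t₁), β + (tval n₁ w - t₁),
      ⟨by linarith, by linarith⟩, ⟨by linarith, by linarith⟩, by linarith, ?_⟩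
    intro p hp
    obtain ⟨hp0, hp2⟩ := hp
    have hp2' : p < 1/2 := hp2
    have hc0 : (0:ℝ) ≤ 1 - p := by norm_num at hp2' ⊢; linarith
    have hc1 : 1 - p < 1 := by linarith
    have hα' : tval n₁ u₁ ≤ α := by rw [← ht₁']; exact ha1
    have hβ' : β ≤ tval n₁ u₁ + 1/2^n₁ := by rw [← ht₁']; exact hb2
    apply le_antisymm
    · have h := half (μ p) (hsing p ⟨hp0, hp2⟩) (1-p) hc0 hc1 (hv p ⟨hp0, hp2⟩)
        (hb p ⟨hp0, hp2⟩) n₁ hn₁ u₁ w hlw.symm α β hα' hβ' hab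
      have e1 : α + (tval n₁ w - tval n₁ u₁) = α + (tval n₁ w - t₁) := by rw [← ht₁']
      have e2 : β + (tval n₁ w - tval n₁ u₁) = β + (tval n₁ w - t₁) := by rw [← ht₁']
      rw [e1, e2] at h
      exact h
    · have h := half (μ p) (hsing p ⟨hp0, hp2⟩) (1-p) hc0 hc1 (hv p ⟨hp0, hp2⟩)
        (hb p ⟨hp0, hp2⟩) n₁ hn₁ w u₁ hlw
        (α + (tval n₁ w - t₁)) (β + (tval n₁ w - t₁))
        (by linarith) (by linarith) (by linarith)
      rw [← ht₁'] at h
      have e1 : α + (tval n₁ w - t₁) + (t₁ - tval n₁ w) = α := by ring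
      have e2 : β + (tval n₁ w - t₁) + (t₁ - tval n₁ w) = β := by ring
      rw [e1, e2] at h
      exact h
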